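/- Theorem 1 (variance reduction by marginalization): under the factorized transition assumption T_k(x'|x) = P_k(h'|v') τ_k(v'|v), both Z_AIS and Z_mAIS are unbiased estimators of Z, and Var_T[Z_AIS(S_T)] ≥ Var_τ[Z_mAIS(S_τ)]. Moreover the difference of variances equals (Z_0²/N) Σ_X (W(X) − Λ(V))² T(X) ≥ 0. -/

import Mathlib

open Finset

lemma stmt13_sum_arrow_cons {α β : Type*} [Fintype α] [AddCommMonoid β] (n : ℕ)
    (F : (Fin (n+1) → α) → β) :
    ∑ S : Fin (n+1) → α, F S = ∑ a : α, ∑ S' : Fin n → α, F (Fin.cons a S') := by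
  have h1 : ∑ S : Fin (n+1) → α, F S
      = ∑ p : α × (Fin n → α), F (Fin.cons p.1 p.2) :=
    (Fintype.sum_equiv (Fin.consEquiv fun _ => α) _ _ (fun x => rfl)).symm
  rw [h1, Fintype.sum_prod_type]

lemma stmt13_sum_arrow_prodtype {ι α β M : Type*} [Fintype ι] [DecidableEq ι] [Fintype α]
    [Fintype β] [AddCommMonoid M] (F : (ι → α × β) → M) :
    ∑ X : ι → α × β, F X = ∑ f : ι → α, ∑ g : ι → β, F (fun i => (f i, g i)) := by
  have h1 : ∑ X : ι → α × β, F X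
      = ∑ p : (ι → α) × (ι → β), F (fun i => (p.1 i, p.2 i)) :=
    (Fintype.sum_equiv (Equiv.arrowProdEquivProdArrow ι (fun _ => α) (fun _ => β)).symm _ _ (fun x => rfl)).symm
  rw [h1, Fintype.sum_prod_type]

lemma stmt13_sum_pi_prod {ι α : Type*} [Fintype ι] [DecidableEq ι] [Fintype α]
    (g : ι → α → ℝ) :
    ∑ S : ι → α, ∏ i, g i (S i) = ∏ i, ∑ a : α, g i a := by
  rw [Finset.prod_univ_sum, Fintype.piFinset_univ]
lemma stmt13_chain_sum {V : Type*} [Fintype V] :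
    ∀ (n : ℕ) (M : Fin n → V → V → ℝ) (A : Fin (n+1) → V → ℝ)
      (q : Fin (n+1) → V → ℝ) (hq0 : q 0 = A 0)
      (hqs : ∀ (i : Fin n) (w : V),
        q i.succ w = A i.succ w * ∑ v : V, M i w v * q i.castSucc v),
    ∑ g : Fin (n+1) → V,
        (∏ i : Fin n, M i (g i.succ) (g i.castSucc)) * ∏ j : Fin (n+1), A j (g j)
      = ∑ w : V, q (Fin.last n) w := by
  intro n
  induction n with
  | zero =>
    intro M A q hq0 hqs
    rw [stmt13_sum_arrow_cons]
    simp [hq0.symm, Fin.last]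
  | succ n ih =>
    intro M A q hq0 hqs
    rw [stmt13_sum_arrow_cons]
    have key : ∀ (v : V) (g' : Fin (n+1) → V),
        (∏ i : Fin (n+1), M i ((Fin.cons v g' : Fin (n+2) → V) i.succ) ((Fin.cons v g' : Fin (n+2) → V) i.castSucc)) *
          ∏ j : Fin (n+2), A j ((Fin.cons v g' : Fin (n+2) → V) j)
        = (M 0 (g' 0) v * A 0 v) *
          ((∏ i : Fin n, M i.succ (g' i.succ) (g' i.castSucc)) *
            ∏ j : Fin (n+1), A j.succ (g' j)) := by
      intro v g'
      rw [Fin.prod_univ_succ (f := fun i : Fin (n+1) =>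
            M i ((Fin.cons v g' : Fin (n+2) → V) i.succ) ((Fin.cons v g' : Fin (n+2) → V) i.castSucc)),
          Fin.prod_univ_succ (f := fun j : Fin (n+2) => A j ((Fin.cons v g' : Fin (n+2) → V) j))]
      have e1 : ∀ i : Fin n, (Fin.cons v g' : Fin (n+2) → V) i.succ.castSucc = g' i.castSucc := by
        intro i; rw [← Fin.succ_castSucc]; simp
      simp only [Fin.cons_zero, Fin.cons_succ, Fin.castSucc_zero, e1]
      ring
    simp only [key]
    -- now compute
    have swap : ∑ v : V, ∑ g' : Fin (n+1) → V,
        (M 0 (g' 0) v * A 0 v) *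
          ((∏ i : Fin n, M i.succ (g' i.succ) (g' i.castSucc)) *
            ∏ j : Fin (n+1), A j.succ (g' j))
        = ∑ g' : Fin (n+1) → V,
          (∏ i : Fin n, M i.succ (g' i.succ) (g' i.castSucc)) *
            ((∑ v : V, M 0 (g' 0) v * A 0 v) * ∏ j : Fin (n+1), A j.succ (g' j)) := by
      rw [Finset.sum_comm]
      refine Finset.sum_congr rfl (fun g' _ => ?_)
      rw [Finset.sum_mul, Finset.mul_sum]
      refine Finset.sum_congr rfl (fun v _ => ?_)
      ring
    rw [swap]
    -- set up A'' and q'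
    set C : V → ℝ := fun w => ∑ v : V, M 0 w v * A 0 v with hC
    set A'' : Fin (n+1) → V → ℝ :=
      Fin.cases (fun w => A 1 w * C w) (fun j w => A j.succ.succ w) with hA''
    have hprod : ∀ g' : Fin (n+1) → V,
        C (g' 0) * ∏ j : Fin (n+1), A j.succ (g' j) = ∏ j : Fin (n+1), A'' j (g' j) := by
      intro g'
      rw [Fin.prod_univ_succ (f := fun j : Fin (n+1) => A j.succ (g' j)),
          Fin.prod_univ_succ (f := fun j : Fin (n+1) => A'' j (g' j))]
      simp only [hA'', Fin.cases_zero, Fin.cases_succ, Fin.succ_zero_eq_one]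
      ring
    have step : ∑ g' : Fin (n+1) → V,
        (∏ i : Fin n, M i.succ (g' i.succ) (g' i.castSucc)) *
          ((∑ v : V, M 0 (g' 0) v * A 0 v) * ∏ j : Fin (n+1), A j.succ (g' j))
        = ∑ g' : Fin (n+1) → V,
          (∏ i : Fin n, M i.succ (g' i.succ) (g' i.castSucc)) * ∏ j : Fin (n+1), A'' j (g' j) := by
      refine Finset.sum_congr rfl (fun g' _ => ?_)
      rw [← hprod g']
    rw [step]
    have hres := ih (fun i => M i.succ) A'' (fun i => q i.succ)
      (by
        funext w
        have := hqs 0 w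
        simpa [hq0, hA'', hC] using this)
      (by
        intro i w
        show q i.succ.succ w = A'' i.succ w * ∑ v : V, M i.succ w v * q i.castSucc.succ v
        rw [hqs i.succ w]
        simp only [Fin.succ_castSucc, hA'', Fin.cases_succ])
    rw [← Fin.succ_last]
    exact hres
lemma stmt13_iid_norm {α : Type*} [Fintype α] (p : α → ℝ) (hp : ∑ a : α, p a = 1) :
    ∀ N : ℕ, ∑ S : Fin N → α, ∏ μ : Fin N, p (S μ) = 1 := by
  intro N
  induction N with
  | zero => simp
  | succ N ih =>
    rw [stmt13_sum_arrow_cons N (fun S => ∏ μ : Fin (N+1), p (S μ))]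
    have : ∀ (a : α) (S' : Fin N → α),
        ∏ μ : Fin (N+1), p ((Fin.cons a S' : Fin (N+1) → α) μ) = p a * ∏ μ : Fin N, p (S' μ) := by
      intro a S'
      rw [Fin.prod_univ_succ]
      simp [Fin.cons_zero, Fin.cons_succ]
    simp only [this]
    rw [← Finset.sum_mul_sum]
    rw [hp, ih, one_mul]

lemma stmt13_iid_mean {α : Type*} [Fintype α] (p f : α → ℝ) (hp : ∑ a : α, p a = 1) :
    ∀ N : ℕ, ∑ S : Fin N → α, (∏ μ : Fin N, p (S μ)) * (∑ μ : Fin N, f (S μ))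
      = N * ∑ a : α, p a * f a := by
  intro N
  induction N with
  | zero => simp
  | succ N ih =>
    rw [stmt13_sum_arrow_cons N (fun S => (∏ μ : Fin (N+1), p (S μ)) * (∑ μ : Fin (N+1), f (S μ)))]
    have key : ∀ (a : α) (S' : Fin N → α),
        (∏ μ : Fin (N+1), p ((Fin.cons a S' : Fin (N+1) → α) μ)) * (∑ μ : Fin (N+1), f ((Fin.cons a S' : Fin (N+1) → α) μ))
        = (p a * f a) * (∏ μ : Fin N, p (S' μ))
          + p a * ((∏ μ : Fin N, p (S' μ)) * (∑ μ : Fin N, f (S' μ))) := by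
      intro a S'
      rw [Fin.prod_univ_succ, Fin.sum_univ_succ]
      simp only [Fin.cons_zero, Fin.cons_succ]
      ring
    simp only [key]
    rw [Finset.sum_congr rfl (fun a _ => Finset.sum_add_distrib)]
    rw [Finset.sum_add_distrib]
    rw [← Finset.sum_mul_sum, ← Finset.sum_mul_sum]
    rw [stmt13_iid_norm p hp N, hp, ih]
    push_cast
    ring

lemma stmt13_iid_sq {α : Type*} [Fintype α] (p f : α → ℝ) (hp : ∑ a : α, p a = 1) :
    ∀ N : ℕ, ∑ S : Fin N → α, (∏ μ : Fin N, p (S μ)) * (∑ μ : Fin N, f (S μ)) ^ 2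
      = N * (∑ a : α, p a * f a ^ 2)
        + ((N : ℝ) ^ 2 - N) * (∑ a : α, p a * f a) ^ 2 := by
  intro N
  induction N with
  | zero => simp
  | succ N ih =>
    rw [stmt13_sum_arrow_cons N
      (fun S => (∏ μ : Fin (N+1), p (S μ)) * (∑ μ : Fin (N+1), f (S μ)) ^ 2)]
    have key : ∀ (a : α) (S' : Fin N → α),
        (∏ μ : Fin (N+1), p ((Fin.cons a S' : Fin (N+1) → α) μ)) *
          (∑ μ : Fin (N+1), f ((Fin.cons a S' : Fin (N+1) → α) μ)) ^ 2
        = (p a * f a ^ 2) * (∏ μ : Fin N, p (S' μ))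
          + (2 * (p a * f a)) * ((∏ μ : Fin N, p (S' μ)) * (∑ μ : Fin N, f (S' μ)))
          + p a * ((∏ μ : Fin N, p (S' μ)) * (∑ μ : Fin N, f (S' μ)) ^ 2) := by
      intro a S'
      rw [Fin.prod_univ_succ, Fin.sum_univ_succ]
      simp only [Fin.cons_zero, Fin.cons_succ]
      ring
    simp only [key]
    have inner : ∀ a : α, ∑ S' : Fin N → α,
        ((p a * f a ^ 2) * (∏ μ : Fin N, p (S' μ))
          + (2 * (p a * f a)) * ((∏ μ : Fin N, p (S' μ)) * (∑ μ : Fin N, f (S' μ)))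
          + p a * ((∏ μ : Fin N, p (S' μ)) * (∑ μ : Fin N, f (S' μ)) ^ 2))
        = (p a * f a ^ 2) * 1
          + (2 * (p a * f a)) * (N * ∑ b : α, p b * f b)
          + p a * (N * (∑ b : α, p b * f b ^ 2)
              + ((N : ℝ) ^ 2 - N) * (∑ b : α, p b * f b) ^ 2) := by
      intro a
      rw [Finset.sum_add_distrib, Finset.sum_add_distrib,
        ← Finset.mul_sum, ← Finset.mul_sum, ← Finset.mul_sum,
        stmt13_iid_norm p hp N, stmt13_iid_mean p f hp N, ih]
    simp only [inner]
    rw [Finset.sum_add_distrib, Finset.sum_add_distrib,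
      ← Finset.sum_mul, ← Finset.sum_mul, ← Finset.sum_mul,
      ← Finset.mul_sum, hp]
    push_cast
    ring

/-- Theorem 1, variance reduction by marginalization: under the factorized
transition assumption `T_k(x'|x) = P_k(h'|v') τ_k(v'|v)`, both `Z_AIS` and `Z_mAIS` are
unbiased estimators of `Z`, the difference of their variances equals
`(Z_0²/N) Σ_X (W(X) − Λ(V))² T(X) ≥ 0`, and hence `Var_T[Z_AIS] ≥ Var_τ[Z_mAIS]`.
Trajectories are encoded over `Fin (K+1)` (paper's K is `K+1`). -/
theorem stmt13 {V H : Type*} [Fintype V] [Fintype H] (K N : ℕ) (hN : 0 < N)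
    (E : Fin (K + 2) → V → H → ℝ)
    (Z : Fin (K + 2) → ℝ) (hZ : ∀ k, Z k = ∑ v : V, ∑ h : H, Real.exp (-(E k v h)))
    (P : Fin (K + 2) → V × H → ℝ)
    (hP : ∀ k x, P k x = Real.exp (-(E k x.1 x.2)) / Z k)
    (Pv : Fin (K + 2) → V → ℝ) (hPv : ∀ k v, Pv k v = ∑ h : H, P k (v, h))
    (hPvpos : ∀ k v, 0 < Pv k v)
    (Phv : Fin (K + 2) → V → H → ℝ)
    (hPhv : ∀ k v h, Phv k v h = P k (v, h) / Pv k v)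
    (τ : Fin (K + 2) → V → V → ℝ)
    (hτnn : ∀ k v v', 0 ≤ τ k v' v) (hτnorm : ∀ k v, (∑ v' : V, τ k v' v) = 1)
    (hτinv : ∀ k v', (∑ v : V, τ k v' v * Pv k v) = Pv k v')
    (T : Fin (K + 2) → V × H → V × H → ℝ)
    (hT : ∀ k (x' x : V × H), T k x' x = Phv k x'.1 x'.2 * τ k x'.1 x.1)
    (EV : Fin (K + 2) → V → ℝ)
    (hEV : ∀ k v, EV k v = -Real.log (∑ h : H, Real.exp (-(E k v h))))
    (W : (Fin (K + 1) → V × H) → ℝ)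
    (hW : ∀ X, W X = ∏ i : Fin (K + 1),
      Real.exp (-(E i.succ (X i).1 (X i).2) + E i.castSucc (X i).1 (X i).2))
    (Λ : (Fin (K + 1) → V) → ℝ)
    (hΛ : ∀ Vt, Λ Vt = ∏ i : Fin (K + 1),
      Real.exp (-(EV i.succ (Vt i)) + EV i.castSucc (Vt i)))
    (Tp : (Fin (K + 1) → V × H) → ℝ)
    (hTp : ∀ X, Tp X =
      (∏ i : Fin K, T i.succ.castSucc (X i.succ) (X i.castSucc)) * P 0 (X 0))
    (τp : (Fin (K + 1) → V) → ℝ)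
    (hτp : ∀ Vt, τp Vt =
      (∏ i : Fin K, τ i.succ.castSucc (Vt i.succ) (Vt i.castSucc)) * Pv 0 (Vt 0))
    (ZA : (Fin N → Fin (K + 1) → V × H) → ℝ)
    (hZA : ∀ SS, ZA SS = Z 0 / N * ∑ μ : Fin N, W (SS μ))
    (Zm : (Fin N → Fin (K + 1) → V) → ℝ)
    (hZm : ∀ SV, Zm SV = Z 0 / N * ∑ μ : Fin N, Λ (SV μ))
    (VarT Varτ : ℝ)
    (hVarT : VarT =
      (∑ SS : Fin N → Fin (K + 1) → V × H, (∏ μ : Fin N, Tp (SS μ)) * (ZA SS) ^ 2) -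
        (∑ SS : Fin N → Fin (K + 1) → V × H, (∏ μ : Fin N, Tp (SS μ)) * ZA SS) ^ 2)
    (hVarτ : Varτ =
      (∑ SV : Fin N → Fin (K + 1) → V, (∏ μ : Fin N, τp (SV μ)) * (Zm SV) ^ 2) -
        (∑ SV : Fin N → Fin (K + 1) → V, (∏ μ : Fin N, τp (SV μ)) * Zm SV) ^ 2) :
    (∑ SS : Fin N → Fin (K + 1) → V × H, (∏ μ : Fin N, Tp (SS μ)) * ZA SS) =
        Z (Fin.last (K + 1)) ∧
      (∑ SV : Fin N → Fin (K + 1) → V, (∏ μ : Fin N, τp (SV μ)) * Zm SV) =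
        Z (Fin.last (K + 1)) ∧
      VarT - Varτ = Z 0 ^ 2 / N *
        ∑ X : Fin (K + 1) → V × H, (W X - Λ (fun i => (X i).1)) ^ 2 * Tp X ∧
      VarT ≥ Varτ := by

  rcases isEmpty_or_nonempty V with hV | hV
  · -- degenerate: V empty
    have hZl : Z (Fin.last (K+1)) = 0 := by rw [hZ]; simp
    have hVH : IsEmpty (V × H) := by infer_instance
    have he1 : IsEmpty (Fin N → Fin (K+1) → V × H) :=
      ⟨fun S => hVH.false (S ⟨0, hN⟩ 0)⟩
    have he2 : IsEmpty (Fin N → Fin (K+1) → V) :=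
      ⟨fun S => hV.false (S ⟨0, hN⟩ 0)⟩
    have he3 : IsEmpty (Fin (K+1) → V × H) := ⟨fun X => hVH.false (X 0)⟩
    rw [hVarT, hVarτ]
    simp [Finset.univ_eq_empty, hZl]
  · -- main case
    have hH : Nonempty H := by
      rcases isEmpty_or_nonempty H with hH | hH
      · exfalso
        have h0 := hPvpos 0 (Classical.arbitrary V)
        rw [hPv] at h0
        simp at h0
      · exact hH
    have hZpos : ∀ k, 0 < Z k := by
      intro k
      rw [hZ]
      refine Finset.sum_pos (fun v _ => Finset.sum_pos (fun h _ => Real.exp_pos _) ?_) ?_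
      · exact Finset.univ_nonempty
      · exact Finset.univ_nonempty
    have expEV : ∀ k v, Real.exp (-(EV k v)) = ∑ h : H, Real.exp (-(E k v h)) := by
      intro k v
      rw [hEV, neg_neg, Real.exp_log]
      exact Finset.sum_pos (fun h _ => Real.exp_pos _) Finset.univ_nonempty
    have hPvZ : ∀ k v, Pv k v = Real.exp (-(EV k v)) / Z k := by
      intro k v
      rw [hPv, expEV, Finset.sum_div]
      exact Finset.sum_congr rfl (fun h _ => by rw [hP])
    have hPhvE : ∀ k v h, Phv k v h = Real.exp (-(E k v h)) / Real.exp (-(EV k v)) := by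
      intro k v h
      rw [hPhv, hP, hPvZ]
      rw [div_div_div_cancel_right₀]
      exact (hZpos k).ne'
    have hPhvsum : ∀ k v, ∑ h : H, Phv k v h = 1 := by
      intro k v
      simp only [hPhv]
      rw [← Finset.sum_div, ← hPv, div_self (hPvpos k v).ne']
    have hTpnn : ∀ X, 0 ≤ Tp X := by
      intro X
      rw [hTp]
      apply mul_nonneg
      · refine Finset.prod_nonneg (fun i _ => ?_)
        rw [hT]
        apply mul_nonneg
        · rw [hPhvE]; positivity
        · exact hτnn _ _ _
      · rw [hP]; exact div_nonneg (Real.exp_pos _).le (hZpos 0).le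
    -- one-step marginalization identity
    have hD : ∀ (j : Fin (K+1)) (v : V),
        ∑ h : H, Phv j.castSucc v h *
            Real.exp (-(E j.succ v h) + E j.castSucc v h)
          = Real.exp (-(EV j.succ v) + EV j.castSucc v) := by
      intro j v
      have hterm : ∀ h : H, Phv j.castSucc v h *
          Real.exp (-(E j.succ v h) + E j.castSucc v h)
          = Real.exp (-(E j.succ v h)) / Real.exp (-(EV j.castSucc v)) := by
        intro h
        rw [hPhvE, div_mul_eq_mul_div, ← Real.exp_add]
        congr 2
        ring
      rw [Finset.sum_congr rfl (fun h _ => hterm h), ← Finset.sum_div, ← expEV,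
        ← Real.exp_sub]
      congr 1
      ring
    -- factorization of Tp
    have hTpfac : ∀ X : Fin (K+1) → V × H,
        Tp X = τp (fun i => (X i).1) *
          ∏ j : Fin (K+1), Phv j.castSucc (X j).1 (X j).2 := by
      intro X
      rw [hTp, hτp]
      have hP0 : P 0 (X 0) = Phv 0 (X 0).1 (X 0).2 * Pv 0 (X 0).1 := by
        rw [hPhv, div_mul_cancel₀ _ (hPvpos 0 (X 0).1).ne']
      have hTfac : ∀ i : Fin K,
          T i.succ.castSucc (X i.succ) (X i.castSucc)
          = Phv i.succ.castSucc (X i.succ).1 (X i.succ).2 *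
              τ i.succ.castSucc (X i.succ).1 ((X i.castSucc).1) := by
        intro i; rw [hT]
      rw [Finset.prod_congr rfl (fun i _ => hTfac i), Finset.prod_mul_distrib,
        hP0, Fin.prod_univ_succ (f := fun j : Fin (K+1) =>
          Phv j.castSucc (X j).1 (X j).2), Fin.castSucc_zero]
      ring
    -- marginalization lemmas
    have hmarg1 : ∀ Vt : Fin (K+1) → V,
        ∑ Hc : Fin (K+1) → H, Tp (fun i => (Vt i, Hc i)) = τp Vt := by
      intro Vt
      have : ∀ Hc : Fin (K+1) → H, Tp (fun i => (Vt i, Hc i))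
          = τp Vt * ∏ j : Fin (K+1), Phv j.castSucc (Vt j) (Hc j) := by
        intro Hc
        rw [hTpfac]
      rw [Finset.sum_congr rfl (fun Hc _ => this Hc), ← Finset.mul_sum,
        stmt13_sum_pi_prod (fun j h => Phv j.castSucc (Vt j) h)]
      rw [Finset.prod_congr rfl (fun j _ => hPhvsum j.castSucc (Vt j)),
        Finset.prod_const_one, mul_one]
    have hmarg2 : ∀ Vt : Fin (K+1) → V,
        ∑ Hc : Fin (K+1) → H,
          W (fun i => (Vt i, Hc i)) * Tp (fun i => (Vt i, Hc i))
          = Λ Vt * τp Vt := by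
      intro Vt
      have hpt : ∀ Hc : Fin (K+1) → H,
          W (fun i => (Vt i, Hc i)) * Tp (fun i => (Vt i, Hc i))
          = τp Vt * ∏ j : Fin (K+1),
              (Phv j.castSucc (Vt j) (Hc j) *
                Real.exp (-(E j.succ (Vt j) (Hc j)) + E j.castSucc (Vt j) (Hc j))) := by
        intro Hc
        rw [hTpfac, hW, Finset.prod_mul_distrib]
        ring
      rw [Finset.sum_congr rfl (fun Hc _ => hpt Hc), ← Finset.mul_sum,
        stmt13_sum_pi_prod (fun j h => Phv j.castSucc (Vt j) h *
          Real.exp (-(E j.succ (Vt j) h) + E j.castSucc (Vt j) h))]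
      rw [Finset.prod_congr rfl (fun j _ => hD j (Vt j)), ← hΛ Vt]
      ring
    -- chain instantiation (a): normalization of τp
    have hτpsum : ∑ Vt : Fin (K+1) → V, τp Vt = 1 := by
      set M : Fin K → V → V → ℝ := fun i w v => τ i.succ.castSucc w v with hM
      set A : Fin (K+1) → V → ℝ := fun j v => if j = 0 then Pv 0 v else 1 with hA
      set q : Fin (K+1) → V → ℝ :=
        Fin.induction (A 0) (fun i qp w => A i.succ w * ∑ v : V, M i w v * qp v) with hq
      have hq0 : q 0 = A 0 := rfl
      have hqs : ∀ (i : Fin K) (w : V),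
          q i.succ w = A i.succ w * ∑ v : V, M i w v * q i.castSucc v := by
        intro i w
        exact congrFun (Fin.induction_succ (motive := fun _ => V → ℝ) (A 0)
          (fun i qp w => A i.succ w * ∑ v : V, M i w v * qp v) i) w
      have hform : ∀ Vt : Fin (K+1) → V,
          τp Vt = (∏ i : Fin K, M i (Vt i.succ) (Vt i.castSucc)) *
            ∏ j : Fin (K+1), A j (Vt j) := by
        intro Vt
        rw [hτp]
        congr 1
        rw [hA]
        simp only []
        rw [Finset.prod_ite_eq' Finset.univ (0 : Fin (K+1)) (fun j => Pv 0 (Vt j))]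
        simp
      rw [Finset.sum_congr rfl (fun Vt _ => hform Vt),
        stmt13_chain_sum K M A q hq0 hqs]
      have hnorm : ∀ i : Fin (K+1), ∑ w : V, q i w = 1 := by
        intro i
        induction i using Fin.induction with
        | zero =>
          rw [hq0]
          have hA0 : ∀ w : V, A 0 w = Pv 0 w := by intro w; rw [hA]; simp
          rw [Finset.sum_congr rfl (fun w _ => hA0 w),
            Finset.sum_congr rfl (fun w _ => hPvZ 0 w), ← Finset.sum_div,
            Finset.sum_congr rfl (fun w _ => expEV 0 w), ← hZ,
            div_self (hZpos 0).ne']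
        | succ i ih =>
          rw [Finset.sum_congr rfl (fun w _ => hqs i w)]
          have hA1 : ∀ w : V, A i.succ w = 1 := by
            intro w; rw [hA]; simp [Fin.succ_ne_zero]
          simp only [hA1, one_mul]
          rw [Finset.sum_comm]
          have hcol : ∀ v : V, ∑ w : V, M i w v * q i.castSucc v = q i.castSucc v := by
            intro v
            rw [← Finset.sum_mul, hM]
            simp only []
            rw [hτnorm, one_mul]
          rw [Finset.sum_congr rfl (fun v _ => hcol v)]
          exact ih
      exact hnorm (Fin.last K)
    -- chain instantiation (b): ∑ τp * Λ = Z last / Z 0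
    have hτpΛ : ∑ Vt : Fin (K+1) → V, τp Vt * Λ Vt
        = Z (Fin.last (K+1)) / Z 0 := by
      set M : Fin K → V → V → ℝ := fun i w v => τ i.succ.castSucc w v with hM
      set A : Fin (K+1) → V → ℝ := fun j v =>
        Real.exp (-(EV j.succ v) + EV j.castSucc v) * (if j = 0 then Pv 0 v else 1) with hA
      set q : Fin (K+1) → V → ℝ :=
        Fin.induction (A 0) (fun i qp w => A i.succ w * ∑ v : V, M i w v * qp v) with hq
      have hq0 : q 0 = A 0 := rfl
      have hqs : ∀ (i : Fin K) (w : V),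
          q i.succ w = A i.succ w * ∑ v : V, M i w v * q i.castSucc v := by
        intro i w
        exact congrFun (Fin.induction_succ (motive := fun _ => V → ℝ) (A 0)
          (fun i qp w => A i.succ w * ∑ v : V, M i w v * qp v) i) w
      have hform : ∀ Vt : Fin (K+1) → V,
          τp Vt * Λ Vt = (∏ i : Fin K, M i (Vt i.succ) (Vt i.castSucc)) *
            ∏ j : Fin (K+1), A j (Vt j) := by
        intro Vt
        rw [hτp, hΛ, hA]
        simp only []
        rw [Finset.prod_mul_distrib,
          Finset.prod_ite_eq' Finset.univ (0 : Fin (K+1)) (fun j => Pv 0 (Vt j))]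
        simp only [Finset.mem_univ, if_true]
        ring
      rw [Finset.sum_congr rfl (fun Vt _ => hform Vt),
        stmt13_chain_sum K M A q hq0 hqs]
      have hqform : ∀ (i : Fin (K+1)) (v : V),
          q i v = Real.exp (-(EV i.succ v)) / Z 0 := by
        intro i
        induction i using Fin.induction with
        | zero =>
          intro v
          rw [hq0]
          have hA0 : A 0 v = Real.exp (-(EV (0 : Fin (K+1)).succ v) + EV 0 v) * Pv 0 v := by
            rw [hA]; simp
          rw [hA0, hPvZ, mul_div_assoc', ← Real.exp_add]
          congr 2
          ring
        | succ i ih =>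
          intro w
          have hk : (i.castSucc.succ : Fin (K+2)) = i.succ.castSucc := Fin.succ_castSucc i
          have ih' : ∀ v, q i.castSucc v = Real.exp (-(EV i.succ.castSucc v)) / Z 0 := by
            intro v; rw [ih v, hk]
          have hZk := (hZpos i.succ.castSucc).ne'
          have hZ0 := (hZpos 0).ne'
          rw [hqs i w]
          have hsum : ∑ v : V, M i w v * q i.castSucc v
              = Real.exp (-(EV i.succ.castSucc w)) / Z 0 := by
            have hterm : ∀ v : V, M i w v * q i.castSucc v
                = (Z i.succ.castSucc / Z 0) *
                  (τ i.succ.castSucc w v * Pv i.succ.castSucc v) := by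
              intro v
              rw [ih' v, hPvZ, hM]
              field_simp
            rw [Finset.sum_congr rfl (fun v _ => hterm v), ← Finset.mul_sum,
              hτinv, hPvZ]
            field_simp
          rw [hsum]
          have hA1 : A i.succ w
              = Real.exp (-(EV i.succ.succ w) + EV i.succ.castSucc w) := by
            rw [hA]; simp [Fin.succ_ne_zero]
          rw [hA1, mul_div_assoc', ← Real.exp_add]
          congr 2
          ring
      rw [Finset.sum_congr rfl (fun w _ => hqform (Fin.last K) w), ← Finset.sum_div]
      congr 1
      rw [hZ]
      refine Finset.sum_congr rfl (fun v _ => ?_)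
      rw [← expEV, Fin.succ_last]
    -- global moment identities
    have hTpsum : ∑ X : Fin (K+1) → V × H, Tp X = 1 := by
      rw [stmt13_sum_arrow_prodtype (fun X : Fin (K+1) → V × H => Tp X),
        Finset.sum_congr rfl (fun Vt _ => hmarg1 Vt), hτpsum]
    have hm1 : ∑ X : Fin (K+1) → V × H, Tp X * W X = Z (Fin.last (K+1)) / Z 0 := by
      rw [stmt13_sum_arrow_prodtype (fun X : Fin (K+1) → V × H => Tp X * W X)]
      have h1 : ∀ Vt : Fin (K+1) → V, ∑ Hc : Fin (K+1) → H,
          Tp (fun i => (Vt i, Hc i)) * W (fun i => (Vt i, Hc i)) = Λ Vt * τp Vt := by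
        intro Vt
        rw [← hmarg2 Vt]
        exact Finset.sum_congr rfl (fun Hc _ => mul_comm _ _)
      rw [Finset.sum_congr rfl (fun Vt _ => h1 Vt), ← hτpΛ]
      exact Finset.sum_congr rfl (fun Vt _ => mul_comm _ _)
    have hf5 : ∑ X : Fin (K+1) → V × H, Tp X * (W X * Λ (fun i => (X i).1))
        = ∑ Vt : Fin (K+1) → V, τp Vt * Λ Vt ^ 2 := by
      rw [stmt13_sum_arrow_prodtype
        (fun X : Fin (K+1) → V × H => Tp X * (W X * Λ (fun i => (X i).1)))]
      have h1 : ∀ Vt : Fin (K+1) → V, ∑ Hc : Fin (K+1) → H,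
          Tp (fun i => (Vt i, Hc i)) * (W (fun i => (Vt i, Hc i)) * Λ Vt)
          = τp Vt * Λ Vt ^ 2 := by
        intro Vt
        have e : ∀ Hc : Fin (K+1) → H,
            Tp (fun i => (Vt i, Hc i)) * (W (fun i => (Vt i, Hc i)) * Λ Vt)
            = (W (fun i => (Vt i, Hc i)) * Tp (fun i => (Vt i, Hc i))) * Λ Vt := by
          intro Hc; ring
        rw [Finset.sum_congr rfl (fun Hc _ => e Hc), ← Finset.sum_mul, hmarg2]
        ring
      exact Finset.sum_congr rfl (fun Vt _ => h1 Vt)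
    have hf6 : ∑ X : Fin (K+1) → V × H, Tp X * Λ (fun i => (X i).1) ^ 2
        = ∑ Vt : Fin (K+1) → V, τp Vt * Λ Vt ^ 2 := by
      rw [stmt13_sum_arrow_prodtype
        (fun X : Fin (K+1) → V × H => Tp X * Λ (fun i => (X i).1) ^ 2)]
      have h1 : ∀ Vt : Fin (K+1) → V, ∑ Hc : Fin (K+1) → H,
          Tp (fun i => (Vt i, Hc i)) * Λ Vt ^ 2 = τp Vt * Λ Vt ^ 2 := by
        intro Vt
        rw [← Finset.sum_mul, hmarg1]
      exact Finset.sum_congr rfl (fun Vt _ => h1 Vt)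
    have hsq : ∑ X : Fin (K+1) → V × H, (W X - Λ (fun i => (X i).1)) ^ 2 * Tp X
        = (∑ X : Fin (K+1) → V × H, Tp X * W X ^ 2)
          - ∑ Vt : Fin (K+1) → V, τp Vt * Λ Vt ^ 2 := by
      have e : ∀ X : Fin (K+1) → V × H, (W X - Λ (fun i => (X i).1)) ^ 2 * Tp X
          = Tp X * W X ^ 2 - 2 * (Tp X * (W X * Λ (fun i => (X i).1)))
            + Tp X * Λ (fun i => (X i).1) ^ 2 := by
        intro X; ring
      rw [Finset.sum_congr rfl (fun X _ => e X), Finset.sum_add_distrib,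
        Finset.sum_sub_distrib, ← Finset.mul_sum, hf5, hf6]
      ring
    -- N-sample sums
    have hNne : (N : ℝ) ≠ 0 := Nat.cast_ne_zero.mpr hN.ne'
    have hZ0ne := (hZpos 0).ne'
    have hmeanT : ∑ SS : Fin N → Fin (K+1) → V × H, (∏ μ : Fin N, Tp (SS μ)) * ZA SS
        = Z 0 * ∑ X : Fin (K+1) → V × H, Tp X * W X := by
      have e : ∀ SS : Fin N → Fin (K+1) → V × H,
          (∏ μ : Fin N, Tp (SS μ)) * ZA SS
          = (Z 0 / N) * ((∏ μ : Fin N, Tp (SS μ)) * ∑ μ : Fin N, W (SS μ)) := by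
        intro SS; rw [hZA]; ring
      rw [Finset.sum_congr rfl (fun SS _ => e SS), ← Finset.mul_sum,
        stmt13_iid_mean Tp W hTpsum N]
      field_simp
    have hmeanτ : ∑ SV : Fin N → Fin (K+1) → V, (∏ μ : Fin N, τp (SV μ)) * Zm SV
        = Z 0 * ∑ Vt : Fin (K+1) → V, τp Vt * Λ Vt := by
      have e : ∀ SV : Fin N → Fin (K+1) → V,
          (∏ μ : Fin N, τp (SV μ)) * Zm SV
          = (Z 0 / N) * ((∏ μ : Fin N, τp (SV μ)) * ∑ μ : Fin N, Λ (SV μ)) := by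
        intro SV; rw [hZm]; ring
      rw [Finset.sum_congr rfl (fun SV _ => e SV), ← Finset.mul_sum,
        stmt13_iid_mean τp Λ hτpsum N]
      field_simp
    have hsqT : ∑ SS : Fin N → Fin (K+1) → V × H, (∏ μ : Fin N, Tp (SS μ)) * ZA SS ^ 2
        = (Z 0 / N) ^ 2 * (N * (∑ X : Fin (K+1) → V × H, Tp X * W X ^ 2)
            + ((N : ℝ) ^ 2 - N) * (∑ X : Fin (K+1) → V × H, Tp X * W X) ^ 2) := by
      have e : ∀ SS : Fin N → Fin (K+1) → V × H,
          (∏ μ : Fin N, Tp (SS μ)) * ZA SS ^ 2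
          = (Z 0 / N) ^ 2 * ((∏ μ : Fin N, Tp (SS μ)) * (∑ μ : Fin N, W (SS μ)) ^ 2) := by
        intro SS; rw [hZA]; ring
      rw [Finset.sum_congr rfl (fun SS _ => e SS), ← Finset.mul_sum,
        stmt13_iid_sq Tp W hTpsum N]
    have hsqτ : ∑ SV : Fin N → Fin (K+1) → V, (∏ μ : Fin N, τp (SV μ)) * Zm SV ^ 2
        = (Z 0 / N) ^ 2 * (N * (∑ Vt : Fin (K+1) → V, τp Vt * Λ Vt ^ 2)
            + ((N : ℝ) ^ 2 - N) * (∑ Vt : Fin (K+1) → V, τp Vt * Λ Vt) ^ 2) := by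
      have e : ∀ SV : Fin N → Fin (K+1) → V,
          (∏ μ : Fin N, τp (SV μ)) * Zm SV ^ 2
          = (Z 0 / N) ^ 2 * ((∏ μ : Fin N, τp (SV μ)) * (∑ μ : Fin N, Λ (SV μ)) ^ 2) := by
        intro SV; rw [hZm]; ring
      rw [Finset.sum_congr rfl (fun SV _ => e SV), ← Finset.mul_sum,
        stmt13_iid_sq τp Λ hτpsum N]
    have goal1 : (∑ SS : Fin N → Fin (K + 1) → V × H, (∏ μ : Fin N, Tp (SS μ)) * ZA SS)
        = Z (Fin.last (K + 1)) := by
      rw [hmeanT, hm1, mul_div_cancel₀ _ hZ0ne]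
    have goal2 : (∑ SV : Fin N → Fin (K + 1) → V, (∏ μ : Fin N, τp (SV μ)) * Zm SV)
        = Z (Fin.last (K + 1)) := by
      rw [hmeanτ, hτpΛ, mul_div_cancel₀ _ hZ0ne]
    have goal3 : VarT - Varτ = Z 0 ^ 2 / N *
        ∑ X : Fin (K + 1) → V × H, (W X - Λ (fun i => (X i).1)) ^ 2 * Tp X := by
      rw [hVarT, hVarτ, hsqT, hsqτ, hmeanT, hmeanτ, hm1, hτpΛ, hsq]
      field_simp
      ring
    have goal4 : VarT ≥ Varτ := by
      have hnn : 0 ≤ ∑ X : Fin (K + 1) → V × H, (W X - Λ (fun i => (X i).1)) ^ 2 * Tp X :=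
        Finset.sum_nonneg (fun X _ => mul_nonneg (sq_nonneg _) (hTpnn X))
      have hc : (0:ℝ) ≤ Z 0 ^ 2 / N := by positivity
      nlinarith [goal3]
    exact ⟨goal1, goal2, goal3, goal4⟩
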